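/- There exists a graph H on n vertices with n edges (namely the star K_{1,n−1} plus one edge between two leaves) and a map f: E(H) → E(H) with f(e) ≠ e, |f(e)∩e| ≤ 1 for all e, such that H contains no f-free copy of 2K₂. Hence h(n, 2K₂) ≥ n for all n ≥ 4. -/

import Mathlib

open SimpleGraph

variable {V W : Type*}

/-- Two `Sym2` elements (edges) are vertex-disjoint. -/
def sym2Disjoint (e e' : Sym2 V) : Prop := ∀ v, v ∈ e → v ∉ e'

/-- Edge set of the copy of `G` in `H` given by an (injective) homomorphism. -/
def copyEdges (G : SimpleGraph V) (H : SimpleGraph W) (φ : G →g H) : Set (Sym2 W) :=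
  Sym2.map φ '' G.edgeSet

/-- The edge set `E` is `f`-free. -/
def IsFreeSet (f : Sym2 W → Sym2 W) (E : Set (Sym2 W)) : Prop := ∀ e ∈ E, f e ∉ E

/-- `f` is an edge mapping of `H` with `f e ≠ e` (equivalently `|f e ∩ e| ≤ 1`). -/
def IsEdgeMap (H : SimpleGraph W) (f : Sym2 W → Sym2 W) : Prop :=
  ∀ e ∈ H.edgeSet, f e ∈ H.edgeSet ∧ f e ≠ e

/-- `f` is an edge mapping of `H` with `f e ∩ e = ∅`. -/
def IsDisjEdgeMap (H : SimpleGraph W) (f : Sym2 W → Sym2 W) : Prop :=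
  ∀ e ∈ H.edgeSet, f e ∈ H.edgeSet ∧ sym2Disjoint e (f e)

/-- `H` contains a copy of `G` (as a not necessarily induced subgraph). -/
def Contains (G : SimpleGraph V) (H : SimpleGraph W) : Prop :=
  ∃ φ : G →g H, Function.Injective φ

/-- `H` has no `f`-free copy of `G`. -/
def NoFreeCopy (G : SimpleGraph V) (H : SimpleGraph W) (f : Sym2 W → Sym2 W) : Prop :=
  ∀ φ : G →g H, Function.Injective φ → ¬ IsFreeSet f (copyEdges G H φ)

/-- The Turán number `ex(n, G)`. -/
noncomputable def exNum (n : ℕ) (G : SimpleGraph V) : ℕ :=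
  sSup {m | ∃ H : SimpleGraph (Fin n), H.edgeSet.ncard = m ∧ ¬ Contains G H}

/-- The parameter `h(n, G)`. -/
noncomputable def hNum (n : ℕ) (G : SimpleGraph V) : ℕ :=
  sSup {m | ∃ (H : SimpleGraph (Fin n)) (f : Sym2 (Fin n) → Sym2 (Fin n)),
    H.edgeSet.ncard = m ∧ IsEdgeMap H f ∧ NoFreeCopy G H f}

/-- Independence number. -/
noncomputable def indepNum (G : SimpleGraph V) [Fintype V] : ℕ :=
  sSup {m | ∃ s : Finset V, (∀ v ∈ s, ∀ w ∈ s, ¬ G.Adj v w) ∧ s.card = m}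

/-- The matching `tK₂` on `Fin (2t)`: vertices `2i, 2i+1` are matched. -/
def matching (t : ℕ) : SimpleGraph (Fin (2*t)) :=
  SimpleGraph.fromRel (fun v w => (v : ℕ) / 2 = (w : ℕ) / 2)

/-- The star `K_{1,r}` on `Fin (r+1)`, with center `0`. -/
def starG (r : ℕ) : SimpleGraph (Fin (r+1)) :=
  SimpleGraph.fromRel (fun v _ => v = 0)

theorem stmt17aux' (n : ℕ) (z a b c : Fin n)
    (hza : z ≠ a) (hzb : z ≠ b) (hzc : z ≠ c) (hab : a ≠ b) (hac : a ≠ c) (hbc : b ≠ c)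
    (hn : 4 ≤ n) :
    ∃ (H : SimpleGraph (Fin n)) (f : Sym2 (Fin n) → Sym2 (Fin n)),
      H.edgeSet.ncard = n ∧ IsEdgeMap H f ∧ NoFreeCopy (matching 2) H f := by
  classical
  set H : SimpleGraph (Fin n) := SimpleGraph.fromRel (fun v w => v = z ∨ (v = a ∧ w = b)) with hH
  have hAdj : ∀ x y : Fin n, H.Adj x y ↔
      x ≠ y ∧ (x = z ∨ y = z ∨ (x = a ∧ y = b) ∨ (x = b ∧ y = a)) := by
    intro x y
    rw [hH, SimpleGraph.fromRel_adj]
    tauto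
  set f : Sym2 (Fin n) → Sym2 (Fin n) :=
    fun e => if e = s(a, b) then s(z, c) else s(a, b) with hf
  have hfab : f s(a, b) = s(z, c) := by rw [hf]; simp
  have hfne : ∀ e, e ≠ s(a, b) → f e = s(a, b) := by
    intro e he; rw [hf]; simp [he]
  -- edge set characterization
  have hEdge : H.edgeSet = insert s(a, b) ((fun w => s(z, w)) '' {w | w ≠ z}) := by
    ext e
    induction e using Sym2.ind with
    | _ x y =>
      rw [SimpleGraph.mem_edgeSet, hAdj]
      simp only [Set.mem_insert_iff, Set.mem_image, Set.mem_setOf_eq]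
      constructor
      · rintro ⟨hne, (rfl | rfl | ⟨rfl, rfl⟩ | ⟨rfl, rfl⟩)⟩
        · exact Or.inr ⟨y, Ne.symm hne, rfl⟩
        · exact Or.inr ⟨x, hne, Sym2.eq_swap⟩
        · exact Or.inl rfl
        · exact Or.inl Sym2.eq_swap
      · rintro (h | ⟨w, hw, hwe⟩)
        · rcases Sym2.eq_iff.mp h with ⟨rfl, rfl⟩ | ⟨rfl, rfl⟩
          · exact ⟨hab, Or.inr (Or.inr (Or.inl ⟨rfl, rfl⟩))⟩
          · exact ⟨Ne.symm hab, Or.inr (Or.inr (Or.inr ⟨rfl, rfl⟩))⟩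
        · rcases Sym2.eq_iff.mp hwe with ⟨h1, h2⟩ | ⟨h1, h2⟩
          · subst h2; exact ⟨fun hh => hw (h1.trans hh).symm, Or.inl h1.symm⟩
          · subst h2; exact ⟨fun hh => hw (hh.trans h1.symm), Or.inr (Or.inl h1.symm)⟩
  -- cardinality
  have hcard : H.edgeSet.ncard = n := by
    rw [hEdge]
    have himg : ((fun w => s(z, w)) '' {w | w ≠ z}).ncard = n - 1 := by
      rw [Set.ncard_image_of_injOn]
      · have h1 : {w : Fin n | w ≠ z} = ({z}ᶜ : Set (Fin n)) := by ext w; simp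
        rw [h1, Set.compl_eq_univ_diff, Set.ncard_diff_singleton_of_mem (Set.mem_univ z)
          , Set.ncard_univ, Nat.card_eq_fintype_card, Fintype.card_fin]
      · intro w hw w' hw' hww'
        rcases Sym2.eq_iff.mp hww' with ⟨-, h'⟩ | ⟨h1, -⟩
        · exact h'
        · exact absurd h1.symm hw'
    rw [Set.ncard_insert_of_notMem ?_ (Set.toFinite _), himg]
    · omega
    · rintro ⟨w, hw, hww⟩
      rcases Sym2.eq_iff.mp hww with ⟨h', -⟩ | ⟨h', -⟩
      · exact hza h'
      · exact hzb h'
  have habE : s(a, b) ∈ H.edgeSet := by rw [hEdge]; exact Set.mem_insert _ _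
  have hzcE : s(z, c) ∈ H.edgeSet := by
    rw [hEdge]; exact Set.mem_insert_of_mem _ ⟨c, Ne.symm hzc, rfl⟩
  refine ⟨H, f, hcard, ?_, ?_⟩
  · -- IsEdgeMap
    intro e he
    by_cases h : e = s(a, b)
    · subst h
      rw [hfab]
      refine ⟨hzcE, fun hh => ?_⟩
      rcases Sym2.eq_iff.mp hh with ⟨h1, -⟩ | ⟨h1, -⟩
      · exact hza h1
      · exact hzb h1
    · rw [hfne e h]
      exact ⟨habE, fun hh => h hh.symm⟩
  · -- NoFreeCopy
    intro φ hφ hfree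
    have hm01 : (matching 2).Adj 0 1 := ⟨by decide, Or.inl (by decide)⟩
    have hm23 : (matching 2).Adj 2 3 := ⟨by decide, Or.inl (by decide)⟩
    have he1 : s(φ 0, φ 1) ∈ copyEdges (matching 2) H φ :=
      ⟨s(0, 1), hm01, Sym2.map_pair_eq φ 0 1⟩
    have he2 : s(φ 2, φ 3) ∈ copyEdges (matching 2) H φ :=
      ⟨s(2, 3), hm23, Sym2.map_pair_eq φ 2 3⟩
    have hd : ∀ i j : Fin 4, i ≠ j → φ i ≠ φ j := fun i j hij h => hij (hφ h)
    have hE1 : H.Adj (φ 0) (φ 1) := φ.map_adj hm01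
    have hE2 : H.Adj (φ 2) (φ 3) := φ.map_adj hm23
    have hneq : ∀ i j k l : Fin 4, i ≠ k → i ≠ l → s(φ i, φ j) ≠ s(φ k, φ l) := by
      intro i j k l hik hil h
      rcases Sym2.eq_iff.mp h with ⟨h1, -⟩ | ⟨h1, -⟩
      · exact hd i k hik h1
      · exact hd i l hil h1
    have dich : ∀ x y : Fin n, H.Adj x y → s(x, y) = s(a, b) ∨ x = z ∨ y = z := by
      intro x y hxy
      rw [hAdj] at hxy
      rcases hxy.2 with rfl | rfl | ⟨rfl, rfl⟩ | ⟨rfl, rfl⟩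
      · exact Or.inr (Or.inl rfl)
      · exact Or.inr (Or.inr rfl)
      · exact Or.inl rfl
      · exact Or.inl Sym2.eq_swap
    rcases dich _ _ hE1 with h1ab | h1z
    · have hne2 : s(φ 2, φ 3) ≠ s(a, b) := fun h =>
        hneq 2 3 0 1 (by decide) (by decide) (h.trans h1ab.symm)
      have hmem := hfree _ he2
      rw [hfne _ hne2, ← h1ab] at hmem
      exact hmem he1
    · rcases dich _ _ hE2 with h2ab | h2z
      · have hne1 : s(φ 0, φ 1) ≠ s(a, b) := fun h =>
          hneq 0 1 2 3 (by decide) (by decide) (h.trans h2ab.symm)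
        have hmem := hfree _ he1
        rw [hfne _ hne1, ← h2ab] at hmem
        exact hmem he2
      · rcases h1z with h1 | h1 <;> rcases h2z with h2 | h2
        · exact hd 0 2 (by decide) (h1.trans h2.symm)
        · exact hd 0 3 (by decide) (h1.trans h2.symm)
        · exact hd 1 2 (by decide) (h1.trans h2.symm)
        · exact hd 1 3 (by decide) (h1.trans h2.symm)


/-- there is an n-vertex graph with n edges (the star K_{1,n-1} plus an
edge between two leaves) admitting an edge mapping with no f-free copy of 2K₂;
hence h(n, 2K₂) ≥ n for n ≥ 4. -/
theorem stmt17 (n : ℕ) (hn : 4 ≤ n) :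
    (∃ (H : SimpleGraph (Fin n)) (f : Sym2 (Fin n) → Sym2 (Fin n)),
      H.edgeSet.ncard = n ∧ IsEdgeMap H f ∧ NoFreeCopy (matching 2) H f) ∧
    n ≤ hNum n (matching 2) := by
  have h0 : 0 < n := by omega
  have h1 : 1 < n := by omega
  have h2 : 2 < n := by omega
  have h3 : 3 < n := by omega
  obtain ⟨H, f, hc, hm, hn'⟩ :=
    stmt17aux' n ⟨0, h0⟩ ⟨1, h1⟩ ⟨2, h2⟩ ⟨3, h3⟩
      (by simp [Fin.ext_iff]) (by simp [Fin.ext_iff]) (by simp [Fin.ext_iff])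
      (by simp [Fin.ext_iff]) (by simp [Fin.ext_iff]) (by simp [Fin.ext_iff]) hn
  refine ⟨⟨H, f, hc, hm, hn'⟩, ?_⟩
  apply le_csSup
  · refine ⟨Fintype.card (Sym2 (Fin n)), ?_⟩
    rintro m ⟨H', -, hc', -⟩
    have hle := Set.ncard_le_ncard (Set.subset_univ H'.edgeSet) Set.finite_univ
    rw [Set.ncard_univ, Nat.card_eq_fintype_card] at hle
    omega
  · exact ⟨H, f, hc, hm, hn'⟩
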